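/- Let G be a (house, bull)-free graph and let M be a module of G that is not a stable set, and let k = cc(G[M]). Let G_M be the graph obtained from G by deleting M and adding a stable set S_M of k new vertices, each adjacent exactly to those vertices of V(G)∖M that are adjacent to M (i.e., complete to M in G). Then G_M is (house, bull)-free and |V(G_M)| < |V(G)|. -/

import Mathlib

open SimpleGraph

/-- The bull graph: vertices a,b,c,d,e = 0,1,2,3,4; edges ab,bc,cd,be,ce. -/
def bull : SimpleGraph (Fin 5) :=
  SimpleGraph.fromEdgeSet {s(0,1), s(1,2), s(2,3), s(1,4), s(2,4)}

/-- The house graph: complement of the path on five vertices. -/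
def house : SimpleGraph (Fin 5) := (SimpleGraph.pathGraph 5)ᶜ

/-- `G` contains no induced subgraph isomorphic to `F`. -/
def FreeOf {V W : Type*} (G : SimpleGraph V) (F : SimpleGraph W) : Prop :=
  ¬ ∃ f : W ↪ V, ∀ a b : W, G.Adj (f a) (f b) ↔ F.Adj a b

/-- A homogeneous set: every outside vertex is complete or anticomplete to it. -/
def IsHomogSet {V : Type*} (G : SimpleGraph V) (S : Set V) : Prop :=
  ∀ v ∉ S, (∀ s ∈ S, G.Adj v s) ∨ (∀ s ∈ S, ¬ G.Adj v s)

/-- A proper homogeneous set: at least two vertices and not all of `V`. -/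
def IsProperHomogSet {V : Type*} (G : SimpleGraph V) (S : Set V) : Prop :=
  IsHomogSet G S ∧ S.Nontrivial ∧ S ≠ Set.univ

/-- A stable (independent) set. -/
def IsStableSet {V : Type*} (G : SimpleGraph V) (S : Set V) : Prop :=
  S.Pairwise fun u v => ¬ G.Adj u v

/-- A module: a nonempty homogeneous set that overlaps no homogeneous set. -/
def IsModuleSet {V : Type*} (G : SimpleGraph V) (M : Set V) : Prop :=
  M.Nonempty ∧ IsHomogSet G M ∧
    ∀ S : Set V, IsHomogSet G S → S ⊆ M ∨ M ⊆ S ∨ S ∩ M = ∅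

/-- A quasi-maximal module: a module, different from `V`, such that the only
module strictly containing it is `V`. -/
def IsQuasiMaxModule {V : Type*} (G : SimpleGraph V) (M : Set V) : Prop :=
  IsModuleSet G M ∧ M ≠ Set.univ ∧
    ∀ S : Set V, IsModuleSet G S → M ⊂ S → S = Set.univ

/-- A clique cover: a partition of the vertex set into cliques. -/
def IsCliqueCover {V : Type*} (G : SimpleGraph V) (C : Set (Set V)) : Prop :=
  Setoid.IsPartition C ∧ ∀ Q ∈ C, G.IsClique Q

/-- `cc G`: the minimum number of cliques in a clique cover of `G`. -/
noncomputable def cliqueCoverNumber {V : Type*} (G : SimpleGraph V) : ℕ :=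
  sInf {n | ∃ C : Set (Set V), IsCliqueCover G C ∧ C.ncard = n}

/-- `S` is complete to `T`: every vertex of `S` is adjacent to every vertex of `T`. -/
def CompleteTo {V : Type*} (G : SimpleGraph V) (S T : Set V) : Prop :=
  ∀ s ∈ S, ∀ t ∈ T, G.Adj s t

/-- `S` is anticomplete to `T`: no vertex of `S` is adjacent to a vertex of `T`. -/
def AnticompleteTo {V : Type*} (G : SimpleGraph V) (S T : Set V) : Prop :=
  ∀ s ∈ S, ∀ t ∈ T, ¬ G.Adj s t

/-- The 5-tuple setup from the paper: five nonempty pairwise disjoint sets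
`A 0, …, A 4` (corresponding to `A_1, …, A_5`, indices modulo 5) with
`A i` complete to `A (i+1)` for `i ∈ {0,1,2,3}`, `A i` anticomplete to
`A (i+2)` for all `i`, and `A 4` complete or anticomplete to `A 0`. -/
def GoodTuple {V : Type*} (G : SimpleGraph V) (A : Fin 5 → Set V) : Prop :=
  (∀ i, (A i).Nonempty) ∧
  (Pairwise fun i j => Disjoint (A i) (A j)) ∧
  (∀ i : Fin 5, i ≠ 4 → CompleteTo G (A i) (A (i + 1))) ∧
  (∀ i : Fin 5, AnticompleteTo G (A i) (A (i + 2))) ∧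
  (CompleteTo G (A 4) (A 0) ∨ AnticompleteTo G (A 4) (A 0))

/-- A good tuple whose union `A` is inclusionwise maximal among all good tuples. -/
def MaximalGoodTuple {V : Type*} (G : SimpleGraph V) (A : Fin 5 → Set V) : Prop :=
  GoodTuple G A ∧ ∀ A' : Fin 5 → Set V, GoodTuple G A' → ¬ (⋃ i, A i) ⊂ (⋃ i, A' i)

/-- The set `B` of vertices outside `A` that are complete to `A`. -/
def Bset {V : Type*} (G : SimpleGraph V) (A : Fin 5 → Set V) : Set V :=
  {v | v ∉ (⋃ i, A i) ∧ ∀ a ∈ ⋃ i, A i, G.Adj v a}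

/-- The graph obtained from `G` by deleting `M` and adding a stable set of `k`
new vertices, each adjacent exactly to those vertices of `V ∖ M` that are
complete to `M` in `G`. -/
def replaceByStable {V : Type*} (G : SimpleGraph V) (M : Set V) (k : ℕ) :
    SimpleGraph ((↥(Mᶜ : Set V)) ⊕ Fin k) where
  Adj x y :=
    match x, y with
    | Sum.inl a, Sum.inl b => G.Adj a b
    | Sum.inl a, Sum.inr _ => ∀ m ∈ M, G.Adj a m
    | Sum.inr _, Sum.inl b => ∀ m ∈ M, G.Adj b m
    | Sum.inr _, Sum.inr _ => False
  symm := by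
    constructor
    rintro (a | i) (b | j) h
    · exact G.adj_symm h
    · exact h
    · exact h
    · exact h.elim
  loopless := by
    constructor
    rintro (a | i) h
    · exact G.irrefl h
    · exact h


lemma house_adj (a b : Fin 5) : house.Adj a b ↔
    (a ≠ b ∧ ¬(a.val + 1 = b.val ∨ b.val + 1 = a.val)) := by
  simp [house, SimpleGraph.pathGraph_adj]

lemma bull_adj (a b : Fin 5) : bull.Adj a b ↔
    ((s(a,b) = s(0,1) ∨ s(a,b) = s(1,2) ∨ s(a,b) = s(2,3) ∨ s(a,b) = s(1,4) ∨ s(a,b) = s(2,4)) ∧ a ≠ b) := by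
  simp [bull, SimpleGraph.fromEdgeSet_adj, Set.mem_insert_iff, Set.mem_singleton_iff]

lemma house_noTwins : ∀ a b : Fin 5, a ≠ b → ¬ house.Adj a b →
    ¬ (∀ c, house.Adj a c ↔ house.Adj b c) := by
  simp only [house_adj]; decide

lemma bull_noTwins : ∀ a b : Fin 5, a ≠ b → ¬ bull.Adj a b →
    ¬ (∀ c, bull.Adj a c ↔ bull.Adj b c) := by
  simp only [bull_adj]; decide

lemma free_replace {V : Type*} (G : SimpleGraph V) (M : Set V)
    (hHom : IsHomogSet G M) (hne : M.Nonempty) (k : ℕ)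
    {F : SimpleGraph (Fin 5)} (hF : FreeOf G F)
    (hTwin : ∀ a b : Fin 5, a ≠ b → ¬ F.Adj a b →
      ¬ (∀ c, F.Adj a c ↔ F.Adj b c)) :
    FreeOf (replaceByStable G M k) F := by
  rintro ⟨f, hf⟩
  obtain ⟨m0, hm0⟩ := hne
  -- key fact: for v ∉ M, adjacent to m0 iff complete to M
  have key : ∀ v : ↥(Mᶜ : Set V), (G.Adj v.1 m0 ↔ ∀ m ∈ M, G.Adj v.1 m) := by
    intro v
    constructor
    · intro h m hm
      rcases hHom v.1 v.2 with hc | ha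
      · exact hc m hm
      · exact absurd h (ha m0 hm0)
    · intro h; exact h m0 hm0
  -- at most one index maps to the right side
  have atmost : ∀ a b : Fin 5, (∃ i, f a = Sum.inr i) → (∃ j, f b = Sum.inr j) → a = b := by
    rintro a b ⟨i, hi⟩ ⟨j, hj⟩
    by_contra hab
    have hnadj : ¬ F.Adj a b := by
      rw [← hf a b, hi, hj]; exact fun h => h
    refine hTwin a b hab hnadj ?_
    intro c
    rw [← hf a c, ← hf b c, hi, hj]
    cases hc : f c with
    | inl v => exact Iff.rfl
    | inr j' => exact Iff.rfl
  -- build embedding into G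
  classical
  set g : Fin 5 → V := fun a => Sum.elim (fun v : ↥(Mᶜ : Set V) => (v : V)) (fun _ : Fin k => m0) (f a) with hg
  have hgM : ∀ a, (∃ i, f a = Sum.inr i) → g a = m0 := by
    intro a ⟨i, hi⟩; simp [hg, hi]
  have hgC : ∀ a v, f a = Sum.inl v → g a = v.1 := by
    intro a v hv; simp [hg, hv]
  have ginj : Function.Injective g := by
    intro a b hab
    cases ha : f a with
    | inl v =>
      cases hb : f b with
      | inl w =>
        have : v = w := Subtype.ext (by rw [← hgC a v ha, ← hgC b w hb, hab])
        exact f.injective (by rw [ha, hb, this])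
      | inr j =>
        exfalso
        have h1 := hgC a v ha
        have h2 := hgM b ⟨j, hb⟩
        rw [h1, h2] at hab
        exact v.2 (hab ▸ hm0)
    | inr i =>
      cases hb : f b with
      | inl w =>
        exfalso
        have h1 := hgM a ⟨i, ha⟩
        have h2 := hgC b w hb
        rw [h1, h2] at hab
        exact w.2 (hab ▸ hm0)
      | inr j => exact atmost a b ⟨i, ha⟩ ⟨j, hb⟩
  refine hF ⟨⟨g, ginj⟩, ?_⟩
  intro a b
  rw [← hf a b]
  show G.Adj (g a) (g b) ↔ _
  cases ha : f a with
  | inl v =>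
    cases hb : f b with
    | inl w =>
      rw [hgC a v ha, hgC b w hb]; exact Iff.rfl
    | inr j =>
      rw [hgC a v ha, hgM b ⟨j, hb⟩]
      exact key v
  | inr i =>
    cases hb : f b with
    | inl w =>
      rw [hgM a ⟨i, ha⟩, hgC b w hb]
      constructor
      · intro h; exact (key w).mp (G.adj_symm h)
      · intro h; exact G.adj_symm ((key w).mpr h)
    | inr j =>
      have hab := atmost a b ⟨i, ha⟩ ⟨j, hb⟩
      subst hab
      constructor
      · exact fun h => absurd rfl (G.ne_of_adj h)
      · exact fun h => h.elim

lemma cc_lt {V : Type*} [Fintype V] (G : SimpleGraph V) (M : Set V)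
    (hMs : ¬ IsStableSet G M) :
    cliqueCoverNumber (G.induce M) < Nat.card ↥M := by
  classical
  rw [IsStableSet, Set.Pairwise] at hMs
  push_neg at hMs
  obtain ⟨u, hu, v, hv, hne, hadj⟩ := hMs
  set u' : ↥M := ⟨u, hu⟩
  set v' : ↥M := ⟨v, hv⟩
  have hne' : u' ≠ v' := fun h => hne (congrArg Subtype.val h)
  set P : Set ↥M := {u', v'} with hP
  set S : Set (Set ↥M) := (fun w => ({w} : Set ↥M)) '' Pᶜ with hS
  set C : Set (Set ↥M) := insert P S with hC
  have hFin : Fintype ↥M := Fintype.ofFinite ↥M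
  have hn : Nat.card ↥M = Fintype.card ↥M := Nat.card_eq_fintype_card
  have hge2 : 2 ≤ Nat.card ↥M := by
    rw [hn]
    exact Fintype.one_lt_card_iff.mpr ⟨u', v', hne'⟩
  -- C is a clique cover
  have hPart : Setoid.IsPartition C := by
    constructor
    · rintro (h : ∅ ∈ C)
      rcases h with h | ⟨w, hw, h⟩
      · have : u' ∈ (∅ : Set ↥M) := h ▸ Set.mem_insert u' {v'}
        exact this
      · simp only at h
        exact (Set.singleton_ne_empty w) h
    · intro a
      by_cases ha : a ∈ P
      · refine ⟨P, ⟨Set.mem_insert _ _, ha⟩, ?_⟩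
        rintro Q ⟨hQ, haQ⟩
        rcases hQ with h | ⟨w, hw, h⟩
        · exact h
        · exfalso; rw [← h] at haQ
          rw [Set.mem_singleton_iff] at haQ
          exact hw (haQ ▸ ha)
      · refine ⟨{a}, ⟨Set.mem_insert_of_mem _ ⟨a, ha, rfl⟩, rfl⟩, ?_⟩
        rintro Q ⟨hQ, haQ⟩
        rcases hQ with h | ⟨w, hw, h⟩
        · exact absurd (h ▸ haQ) ha
        · rw [← h] at haQ
          rw [Set.mem_singleton_iff] at haQ
          rw [← h, haQ]
  have hCliques : ∀ Q ∈ C, (G.induce M).IsClique Q := by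
    rintro Q (h | ⟨w, hw, h⟩)
    · rw [h]
      intro x hx y hy hxy
      rcases hx with hx | hx <;> rcases hy with hy | hy <;>
        obtain rfl : x = _ := hx <;> obtain rfl : y = _ := hy
      · exact absurd rfl hxy
      · exact hadj
      · exact G.adj_symm hadj
      · exact absurd rfl hxy
    · rw [← h]
      exact Set.pairwise_singleton _ _
  -- cardinality of C
  have hPS : P ∉ S := by
    rintro ⟨w, hw, h⟩
    simp only at h
    have h1 : u' ∈ ({w} : Set ↥M) := h ▸ Set.mem_insert _ _
    have h2 : v' ∈ ({w} : Set ↥M) := h ▸ Set.mem_insert_of_mem _ rfl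
    rw [Set.mem_singleton_iff] at h1 h2
    exact hne' (h1.trans h2.symm)
  have hcard : C.ncard = Nat.card ↥M - 1 := by
    rw [hC, Set.ncard_insert_of_notMem hPS (Set.toFinite S), hS,
      Set.ncard_image_of_injective _ Set.singleton_injective]
    have h1 : P.ncard = 2 := Set.ncard_pair hne'
    have h2 : P.ncard + Pᶜ.ncard = Nat.card ↥M := Set.ncard_add_ncard_compl P
    omega
  have : cliqueCoverNumber (G.induce M) ≤ Nat.card ↥M - 1 :=
    Nat.sInf_le ⟨C, ⟨hPart, hCliques⟩, hcard⟩
  omega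

/-- Let `G` be a (house, bull)-free graph, `M` a module of `G`
that is not a stable set, and `k = cc(G[M])`. Then the graph `G_M` obtained by
replacing `M` with a stable set of `k` new vertices is (house, bull)-free and
has fewer vertices than `G`. -/
theorem stmt18 {V : Type*} [Fintype V] (G : SimpleGraph V)
    (hHouse : FreeOf G house) (hBull : FreeOf G bull)
    (M : Set V) (hM : IsModuleSet G M) (hMs : ¬ IsStableSet G M) :
    FreeOf (replaceByStable G M (cliqueCoverNumber (G.induce M))) house ∧
    FreeOf (replaceByStable G M (cliqueCoverNumber (G.induce M))) bull ∧
    Nat.card ((↥(Mᶜ : Set V)) ⊕ Fin (cliqueCoverNumber (G.induce M))) < Nat.card V := by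
  classical
  obtain ⟨hMne, hHom, -⟩ := hM
  refine ⟨free_replace G M hHom hMne _ hHouse house_noTwins,
    free_replace G M hHom hMne _ hBull bull_noTwins, ?_⟩
  have h1 : Nat.card ((↥(Mᶜ : Set V)) ⊕ Fin (cliqueCoverNumber (G.induce M)))
      = Nat.card ↥(Mᶜ : Set V) + cliqueCoverNumber (G.induce M) := by
    simp [Nat.card_sum]
  have h2 := cc_lt G M hMs
  have h3 : M.ncard + (Mᶜ : Set V).ncard = Nat.card V := Set.ncard_add_ncard_compl M
  have h4 : Nat.card ↥M = M.ncard := Nat.card_coe_set_eq M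
  have h5 : Nat.card ↥(Mᶜ : Set V) = (Mᶜ : Set V).ncard := Nat.card_coe_set_eq _
  omega
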